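/- arXiv:2201.08480 — 2 statements merged into one kernel-verified Lean document; each statement's English description precedes it below -/
import Mathlib

section
/- Let (A, ‖·‖) be a normed commutative ring. The set M(A) of all multiplicative seminorms on A that are bounded by ‖·‖ (i.e. functions |·| : A → ℝ≥0 with |0| = 0, |1| = 1, |a+b| ≤ |a| + |b|, |ab| = |a||b|, and |a| ≤ ‖a‖ for all a, b ∈ A), viewed as a subset of the product space ∏_{a ∈ A} [0, ‖a‖] with the product (pointwise convergence) topology, is compact. -/
/-- The Berkovich spectrum of a normed commutative ring: the set of bounded
multiplicative seminorms, viewed inside the space of functions `A → ℝ` with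
the topology of pointwise convergence, is compact. -/
theorem berkovich_spectrum_compact {A : Type*} [CommRing A]
    (N : A → ℝ) (hN0 : ∀ a : A, 0 ≤ N a) (hN1 : N 1 ≥ 1)
    (hNtri : ∀ a b : A, N (a + b) ≤ N a + N b)
    (hNmul : ∀ a b : A, N (a * b) ≤ N a * N b) :
    IsCompact {f : A → ℝ |
      (∀ a : A, 0 ≤ f a) ∧ f 0 = 0 ∧ f 1 = 1 ∧
      (∀ a b : A, f (a + b) ≤ f a + f b) ∧
      (∀ a b : A, f (a * b) = f a * f b) ∧
      (∀ a : A, f a ≤ N a)} := by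
  have hKc : IsCompact (Set.pi Set.univ fun a : A => Set.Icc (0 : ℝ) (N a)) :=
    isCompact_univ_pi fun a => isCompact_Icc
  apply hKc.of_isClosed_subset
  · simp only [Set.setOf_and, Set.setOf_forall]
    apply IsClosed.inter
    · exact isClosed_iInter fun a =>
        isClosed_le continuous_const (continuous_apply a)
    apply IsClosed.inter
    · exact isClosed_eq (continuous_apply 0) continuous_const
    apply IsClosed.inter
    · exact isClosed_eq (continuous_apply 1) continuous_const
    apply IsClosed.inter
    · exact isClosed_iInter fun a => isClosed_iInter fun b =>
        isClosed_le (continuous_apply (a + b))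
          ((continuous_apply a).add (continuous_apply b))
    apply IsClosed.inter
    · exact isClosed_iInter fun a => isClosed_iInter fun b =>
        isClosed_eq (continuous_apply (a * b))
          ((continuous_apply a).mul (continuous_apply b))
    · exact isClosed_iInter fun a =>
        isClosed_le (continuous_apply a) continuous_const
  · rintro f ⟨h0, -, -, -, -, hle⟩ a -
    exact ⟨h0 a, hle a⟩
end

section
/- Let z₁, z₂ ∈ ℂ and r₁ > 0, r₂ > 0 be real numbers. Let ν_{z₂,r₂} denote the probability measure on ℂ obtained as the image of the normalized Lebesgue measure on [0, 2π) under θ ↦ z₂ + r₂ e^{iθ} (the normalized arclength measure on the circle of center z₂ and radius r₂). Then ν_{z₂,r₂} of the closed disk {w ∈ ℂ : |w − z₁| ≤ r₁} is at most r₁/r₂. -/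
set_option maxHeartbeats 1000000

open MeasureTheory

/-- The uniform probability measure on the circle of center `z₂` and radius
`r₂` gives mass at most `r₁ / r₂` to the closed disk of center `z₁` and
radius `r₁`. -/
theorem circle_measure_closed_disk_le (z₁ z₂ : ℂ) (r₁ r₂ : ℝ)
    (hr₁ : 0 < r₁) (hr₂ : 0 < r₂) :
    (Measure.map (fun θ : ℝ => z₂ + (r₂ : ℂ) * Complex.exp ((θ : ℂ) * Complex.I))
        ((ENNReal.ofReal (2 * Real.pi))⁻¹ • volume.restrict (Set.Ico 0 (2 * Real.pi))))
      {w : ℂ | ‖w - z₁‖ ≤ r₁} ≤ ENNReal.ofReal (r₁ / r₂) := by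
  have hf : Measurable (fun θ : ℝ => z₂ + (r₂ : ℂ) * Complex.exp ((θ : ℂ) * Complex.I)) := by
    fun_prop
  have hD : MeasurableSet {w : ℂ | ‖w - z₁‖ ≤ r₁} := by
    have : IsClosed {w : ℂ | ‖w - z₁‖ ≤ r₁} :=
      isClosed_le (continuous_norm.comp (continuous_id.sub continuous_const)) continuous_const
    exact this.measurableSet
  have h2π : (0:ℝ) < 2 * Real.pi := by positivity
  rw [Measure.map_apply hf hD, Measure.smul_apply, Measure.restrict_apply (hf hD), smul_eq_mul]
  by_cases hr : r₂ ≤ r₁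
  · -- trivial case: the whole measure has mass 1 ≤ r₁/r₂
    calc (ENNReal.ofReal (2 * Real.pi))⁻¹ *
          volume ((fun θ : ℝ => z₂ + (r₂:ℂ) * Complex.exp ((θ:ℂ) * Complex.I)) ⁻¹'
            {w : ℂ | ‖w - z₁‖ ≤ r₁} ∩ Set.Ico 0 (2 * Real.pi))
        ≤ (ENNReal.ofReal (2 * Real.pi))⁻¹ * volume (Set.Ico (0:ℝ) (2 * Real.pi)) := by
          gcongr
          exact Set.inter_subset_right
      _ = 1 := by
          rw [Real.volume_Ico, sub_zero, ENNReal.inv_mul_cancel]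
          · exact (ENNReal.ofReal_pos.mpr h2π).ne'
          · exact ENNReal.ofReal_ne_top
      _ ≤ ENNReal.ofReal (r₁ / r₂) := by
          exact ENNReal.one_le_ofReal.mpr ((one_le_div hr₂).mpr hr)
  · push_neg at hr
    set ρ := r₁ / r₂ with hρdef
    have hρ0 : 0 < ρ := div_pos hr₁ hr₂
    have hρ1 : ρ < 1 := (div_lt_one hr₂).mpr hr
    set δ := Real.arcsin ρ with hδdef
    have hδ0 : 0 < δ := Real.arcsin_pos.mpr hρ0
    have hδπ : δ ≤ Real.pi / 2 := Real.arcsin_le_pi_div_two ρ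
    set φ := Complex.arg (z₁ - z₂) with hφdef
    have hφ1 : -Real.pi < φ := Complex.neg_pi_lt_arg _
    have hφ2 : φ ≤ Real.pi := Complex.arg_le_pi _
    set s := Real.sqrt (1 - ρ ^ 2) with hsdef
    have hs2 : s ^ 2 = 1 - ρ ^ 2 := Real.sq_sqrt (by nlinarith)
    have hs0 : 0 ≤ s := Real.sqrt_nonneg _
    -- key inclusion
    have key : (fun θ : ℝ => z₂ + (r₂:ℂ) * Complex.exp ((θ:ℂ) * Complex.I)) ⁻¹'
          {w : ℂ | ‖w - z₁‖ ≤ r₁} ∩ Set.Ico 0 (2 * Real.pi)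
        ⊆ Set.Icc (φ - δ) (φ + δ) ∪
          Set.Icc (φ + 2 * Real.pi - δ) (φ + 2 * Real.pi + δ) := by
      rintro θ ⟨habs, hθ0, hθ2⟩
      simp only [Set.mem_preimage, Set.mem_setOf_eq] at habs
      set c' := ‖z₁ - z₂‖ with hc'def
      have hc'0 : 0 ≤ c' := norm_nonneg _
      have hz : (c' : ℂ) * Complex.exp ((φ:ℂ) * Complex.I) = z₁ - z₂ :=
        Complex.norm_mul_exp_arg_mul_I _
      have e1 : Complex.exp ((φ:ℂ) * Complex.I) * Complex.exp ((↑(θ - φ):ℂ) * Complex.I)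
          = Complex.exp ((θ:ℂ) * Complex.I) := by
        rw [← Complex.exp_add]
        congr 1
        push_cast
        ring
      have factor : z₂ + (r₂:ℂ) * Complex.exp ((θ:ℂ) * Complex.I) - z₁ =
          Complex.exp ((φ:ℂ) * Complex.I) *
            ((r₂:ℂ) * Complex.exp ((↑(θ - φ):ℂ) * Complex.I) - (c':ℂ)) := by
        linear_combination hz - (r₂:ℂ) * e1
      have habs2 : ‖(r₂:ℂ) * Complex.exp ((↑(θ - φ):ℂ) * Complex.I) - (c':ℂ)‖ ≤ r₁ := by
        rwa [factor, norm_mul, Complex.norm_exp_ofReal_mul_I, one_mul] at habs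
      set x := θ - φ with hxdef
      have hsq : (r₂ * Real.cos x - c') ^ 2 + (r₂ * Real.sin x) ^ 2 ≤ r₁ ^ 2 := by
        have h1 : ‖(r₂:ℂ) * Complex.exp ((x:ℂ) * Complex.I) - (c':ℂ)‖ ^ 2 ≤ r₁ ^ 2 :=
          pow_le_pow_left₀ (norm_nonneg _) habs2 2
        rw [Complex.sq_norm, Complex.normSq_apply] at h1
        simpa [Complex.exp_mul_I, Complex.mul_re, Complex.mul_im, Complex.cos_ofReal_re,
          Complex.sin_ofReal_re, Complex.cos_ofReal_im, Complex.sin_ofReal_im, sq] using h1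
      have hr₁ρ : r₁ = r₂ * ρ := by rw [hρdef]; field_simp
      have hpyth := Real.sin_sq_add_cos_sq x
      have h2' : r₂ ^ 2 * Real.sin x ^ 2 + r₂ ^ 2 * Real.cos x ^ 2 = r₂ ^ 2 := by
        nlinarith [hpyth]
      have hr₁sq : r₁ ^ 2 = r₂ ^ 2 * ρ ^ 2 := by rw [hr₁ρ]; ring
      have hexp : r₂ ^ 2 + c' ^ 2 - r₂ ^ 2 * ρ ^ 2 ≤ 2 * r₂ * c' * Real.cos x := by
        nlinarith [hsq, h2', hr₁sq]
      have hs2' : r₂ ^ 2 * s ^ 2 = r₂ ^ 2 * (1 - ρ ^ 2) := by rw [hs2]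
      have hcos : s ≤ Real.cos x := by
        rcases eq_or_lt_of_le hc'0 with h0 | h0
        · exfalso
          rw [← h0] at hexp
          nlinarith [hexp]
        · have hkey : 2 * r₂ * c' * s ≤ 2 * r₂ * c' * Real.cos x := by
            nlinarith [hexp, hs2', sq_nonneg (c' - r₂ * s)]
          exact le_of_mul_le_mul_left hkey (by positivity)
      clear hsq hexp hs2' h2' habs habs2 factor e1 hz
      -- reduce mod 2π
      set k := round (x / (2 * Real.pi)) with hkdef
      have hround : |x / (2 * Real.pi) - (k:ℝ)| ≤ 1 / 2 := abs_sub_round _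
      have hyπ : |x - 2 * Real.pi * k| ≤ Real.pi := by
        have h2 : x - 2 * Real.pi * k = 2 * Real.pi * (x / (2 * Real.pi) - k) := by
          field_simp
        rw [h2, abs_mul, abs_of_pos h2π]
        have := mul_le_mul_of_nonneg_left hround (le_of_lt h2π)
        linarith
      have hcosy : Real.cos (x - 2 * Real.pi * k) = Real.cos x := by
        rw [show x - 2 * Real.pi * k = x - (k:ℝ) * (2 * Real.pi) by ring]
        exact Real.cos_sub_int_mul_two_pi x k
      have hcδ : Real.cos δ = s := Real.cos_arcsin ρ
      have hy : |x - 2 * Real.pi * k| ≤ δ := by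
        by_contra hlt
        push_neg at hlt
        have habsmem : |x - 2 * Real.pi * k| ∈ Set.Icc 0 Real.pi := ⟨abs_nonneg _, hyπ⟩
        have hδmem : δ ∈ Set.Icc 0 Real.pi := ⟨hδ0.le, by linarith [Real.pi_pos]⟩
        have := Real.strictAntiOn_cos hδmem habsmem hlt
        rw [Real.cos_abs, hcosy, hcδ] at this
        linarith
      obtain ⟨hy1, hy2⟩ := abs_le.mp hy
      have hπ := Real.pi_pos
      have hk0 : (0:ℤ) ≤ k := by
        have h : (-1:ℝ) < (k:ℝ) := by nlinarith
        have : (-1:ℤ) < k := by exact_mod_cast h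
        omega
      have hk1 : k ≤ 1 := by
        have h : (k:ℝ) < 2 := by nlinarith
        have : k < (2:ℤ) := by exact_mod_cast h
        omega
      interval_cases k
      · left
        rw [Int.cast_zero] at hy1 hy2
        rw [hxdef] at hy1 hy2
        exact ⟨by linarith, by linarith⟩
      · right
        rw [Int.cast_one] at hy1 hy2
        rw [hxdef] at hy1 hy2
        exact ⟨by linarith, by linarith⟩
    -- measure estimate
    have hπ := Real.pi_pos
    calc (ENNReal.ofReal (2 * Real.pi))⁻¹ *
          volume ((fun θ : ℝ => z₂ + (r₂:ℂ) * Complex.exp ((θ:ℂ) * Complex.I)) ⁻¹'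
            {w : ℂ | ‖w - z₁‖ ≤ r₁} ∩ Set.Ico 0 (2 * Real.pi))
        ≤ (ENNReal.ofReal (2 * Real.pi))⁻¹ *
            volume (Set.Icc (φ - δ) (φ + δ) ∪
              Set.Icc (φ + 2 * Real.pi - δ) (φ + 2 * Real.pi + δ)) :=
          mul_le_mul_right (measure_mono key) _
      _ ≤ (ENNReal.ofReal (2 * Real.pi))⁻¹ * ENNReal.ofReal (2 * Real.pi * ρ) := by
          gcongr
          calc volume (Set.Icc (φ - δ) (φ + δ) ∪
                Set.Icc (φ + 2 * Real.pi - δ) (φ + 2 * Real.pi + δ))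
              ≤ volume (Set.Icc (φ - δ) (φ + δ)) +
                volume (Set.Icc (φ + 2 * Real.pi - δ) (φ + 2 * Real.pi + δ)) :=
                measure_union_le _ _
            _ = ENNReal.ofReal (2 * δ) + ENNReal.ofReal (2 * δ) := by
                rw [Real.volume_Icc, Real.volume_Icc,
                  show φ + δ - (φ - δ) = 2 * δ by ring,
                  show φ + 2 * Real.pi + δ - (φ + 2 * Real.pi - δ) = 2 * δ by ring]
            _ = ENNReal.ofReal (4 * δ) := by
                rw [← ENNReal.ofReal_add (by positivity) (by positivity)]
                congr 1
                ring
            _ ≤ ENNReal.ofReal (2 * Real.pi * ρ) := by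
                apply ENNReal.ofReal_le_ofReal
                have hjordan : 2 / Real.pi * δ ≤ Real.sin δ :=
                  Real.mul_le_sin hδ0.le hδπ
                rw [Real.sin_arcsin (by linarith) (by linarith)] at hjordan
                have : δ ≤ Real.pi / 2 * ρ := by
                  rw [div_mul_eq_mul_div, div_le_iff₀ hπ] at hjordan
                  nlinarith
                nlinarith
      _ = ENNReal.ofReal ρ := by
          rw [ENNReal.ofReal_mul h2π.le, ← mul_assoc, ENNReal.inv_mul_cancel
            (ENNReal.ofReal_pos.mpr h2π).ne' ENNReal.ofReal_ne_top, one_mul]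
end
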